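/- Let w : Fin 3 → ℝ with each w i equal to 1 or −1, let Q be the diagonal quadratic form on Fin 3 → ℝ with weights w (QuadraticMap.weightedSumSquares), and let A = CliffordAlgebra Q. Define the Clifford conjugation conj : A → A as the composition of the reversal anti-automorphism with the grade involution. Then for every a ∈ A, the product a · conj a belongs to the center of A. -/
import Mathlib

noncomputable section
namespace Cliff3
open Matrix CliffordAlgebra

abbrev Mat := Matrix (Fin 2) (Fin 2) ℂ

variable (w : Fin 3 → ℝ)

def sg (i : Fin 3) : ℂ := if w i = 1 then 1 else Complex.I

lemma sg_ne_zero (i : Fin 3) : sg w i ≠ 0 := by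
  unfold sg; split <;> simp

lemma sg_sq (hw : ∀ i, w i = 1 ∨ w i = -1) (i : Fin 3) :
    sg w i * sg w i = (w i : ℂ) := by
  rcases hw i with h | h <;> unfold sg <;> rw [h] <;> norm_num [Complex.I_mul_I]

/-- the single-matrix part of the representation -/
def gm : (Fin 3 → ℝ) →ₗ[ℝ] Mat where
  toFun v := !![sg w 2 * v 2, sg w 0 * v 0 - Complex.I * (sg w 1 * v 1);
                sg w 0 * v 0 + Complex.I * (sg w 1 * v 1), -(sg w 2 * v 2)]
  map_add' x y := by
    ext i j
    fin_cases i <;> fin_cases j <;> simp <;> ring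
  map_smul' r x := by
    ext i j
    fin_cases i <;> fin_cases j <;> simp [Complex.real_smul] <;> ring

def F : (Fin 3 → ℝ) →ₗ[ℝ] Mat × Mat := (gm w).prod (-gm w)

lemma hF (hw : ∀ i, w i = 1 ∨ w i = -1) (v : Fin 3 → ℝ) :
    F w v * F w v = algebraMap ℝ (Mat × Mat) (QuadraticMap.weightedSumSquares ℝ w v) := by
  have hq : QuadraticMap.weightedSumSquares ℝ w v = w 0 * (v 0 * v 0) + w 1 * (v 1 * v 1) + w 2 * (v 2 * v 2) := by
    rw [QuadraticMap.weightedSumSquares_apply, Fin.sum_univ_three]; simp [smul_eq_mul]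
  have key : gm w v * gm w v = algebraMap ℝ Mat (QuadraticMap.weightedSumSquares ℝ w v) := by
    ext i j
    rw [hq]
    have h0 := sg_sq w hw 0
    have h1 := sg_sq w hw 1
    have h2 := sg_sq w hw 2
    have hI := Complex.I_mul_I
    fin_cases i <;> fin_cases j
    · simp [gm, Matrix.mul_apply, Fin.sum_univ_two, Matrix.algebraMap_matrix_apply]
      linear_combination (v 0:ℂ)^2 * h0 + (v 1:ℂ)^2 * h1 + (v 2:ℂ)^2 * h2 - (v 1:ℂ)^2 * sg w 1 * sg w 1 * hI
    · simp [gm, Matrix.mul_apply, Fin.sum_univ_two, Matrix.algebraMap_matrix_apply]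
      ring
    · simp [gm, Matrix.mul_apply, Fin.sum_univ_two, Matrix.algebraMap_matrix_apply]
      ring
    · simp [gm, Matrix.mul_apply, Fin.sum_univ_two, Matrix.algebraMap_matrix_apply]
      linear_combination (v 0:ℂ)^2 * h0 + (v 1:ℂ)^2 * h1 + (v 2:ℂ)^2 * h2 - (v 1:ℂ)^2 * sg w 1 * sg w 1 * hI
  show (gm w v * gm w v, (-gm w v) * (-gm w v)) = _
  rw [neg_mul_neg, key]
  rfl

def ρ (hw : ∀ i, w i = 1 ∨ w i = -1) :
    CliffordAlgebra (QuadraticMap.weightedSumSquares ℝ w) →ₐ[ℝ] Mat × Mat :=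
  CliffordAlgebra.lift _ ⟨F w, hF w hw⟩

local notation "Qw" => QuadraticMap.weightedSumSquares ℝ w

def ε (i : Fin 3) : CliffordAlgebra Qw := ι Qw (Pi.single i 1)

lemma eps_sq (i : Fin 3) : ε w i * ε w i = algebraMap ℝ _ (w i) := by
  rw [ε, ι_sq_scalar]
  congr 1
  rw [QuadraticMap.weightedSumSquares_apply, Fin.sum_univ_three]
  fin_cases i <;> simp [Pi.single_apply]

lemma eps_anticomm {i j : Fin 3} (h : i ≠ j) : ε w i * ε w j = -(ε w j * ε w i) := by
  refine ι_mul_ι_comm_of_isOrtho ?_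
  rw [QuadraticMap.isOrtho_def]
  rw [QuadraticMap.weightedSumSquares_apply, QuadraticMap.weightedSumSquares_apply,
    QuadraticMap.weightedSumSquares_apply, Fin.sum_univ_three, Fin.sum_univ_three,
    Fin.sum_univ_three]
  fin_cases i <;> fin_cases j <;> simp_all [Pi.single_apply] <;> ring

def B : Fin 8 → CliffordAlgebra Qw :=
  ![1, ε w 0, ε w 1, ε w 2, ε w 0 * ε w 1, ε w 0 * ε w 2, ε w 1 * ε w 2,
    ε w 0 * ε w 1 * ε w 2]

lemma B0 : B w 0 = 1 := rfl
lemma B1 : B w 1 = ε w 0 := rfl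
lemma B2 : B w 2 = ε w 1 := rfl
lemma B3 : B w 3 = ε w 2 := rfl
lemma B4 : B w 4 = ε w 0 * ε w 1 := rfl
lemma B5 : B w 5 = ε w 0 * ε w 2 := rfl
lemma B6 : B w 6 = ε w 1 * ε w 2 := rfl
lemma B7 : B w 7 = ε w 0 * ε w 1 * ε w 2 := rfl

def M : Submodule ℝ (CliffordAlgebra Qw) := Submodule.span ℝ (Set.range (B w))

lemma memB (s : Fin 8) : B w s ∈ M w := Submodule.subset_span ⟨s, rfl⟩

-- auxiliary rewriting lemmas
lemma q0' (x) : ε w 0 * (ε w 0 * x) = w 0 • x := by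
  rw [← mul_assoc, eps_sq, Algebra.smul_def]
lemma q1' (x) : ε w 1 * (ε w 1 * x) = w 1 • x := by
  rw [← mul_assoc, eps_sq, Algebra.smul_def]
lemma q2' (x) : ε w 2 * (ε w 2 * x) = w 2 • x := by
  rw [← mul_assoc, eps_sq, Algebra.smul_def]
lemma l10 : ε w 1 * ε w 0 = -(ε w 0 * ε w 1) := eps_anticomm w (by decide)
lemma l20 : ε w 2 * ε w 0 = -(ε w 0 * ε w 2) := eps_anticomm w (by decide)
lemma l21 : ε w 2 * ε w 1 = -(ε w 1 * ε w 2) := eps_anticomm w (by decide)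
lemma l10' (x) : ε w 1 * (ε w 0 * x) = -(ε w 0 * (ε w 1 * x)) := by
  rw [← mul_assoc, l10, neg_mul, mul_assoc]
lemma l20' (x) : ε w 2 * (ε w 0 * x) = -(ε w 0 * (ε w 2 * x)) := by
  rw [← mul_assoc, l20, neg_mul, mul_assoc]
lemma l21' (x) : ε w 2 * (ε w 1 * x) = -(ε w 1 * (ε w 2 * x)) := by
  rw [← mul_assoc, l21, neg_mul, mul_assoc]

-- squares as smul of one
lemma q0 : ε w 0 * ε w 0 = w 0 • (1 : CliffordAlgebra Qw) := by
  rw [eps_sq, Algebra.algebraMap_eq_smul_one]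
lemma q1 : ε w 1 * ε w 1 = w 1 • (1 : CliffordAlgebra Qw) := by
  rw [eps_sq, Algebra.algebraMap_eq_smul_one]
lemma q2 : ε w 2 * ε w 2 = w 2 • (1 : CliffordAlgebra Qw) := by
  rw [eps_sq, Algebra.algebraMap_eq_smul_one]

lemma eps_mul_B (i : Fin 3) (s : Fin 8) : ε w i * B w s ∈ M w := by
  fin_cases i <;> fin_cases s
  · show ε w 0 * B w 0 ∈ M w
    simp only [B0, B1, B2, B3, B4, B5, B6, B7, mul_assoc, l10', l20', l21', l10, l20, l21, q0, q1, q2, q0', q1', q2', mul_one, mul_neg, neg_neg, mul_smul_comm]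
    exact memB w 1
  · show ε w 0 * B w 1 ∈ M w
    simp only [B0, B1, B2, B3, B4, B5, B6, B7, mul_assoc, l10', l20', l21', l10, l20, l21, q0, q1, q2, q0', q1', q2', mul_one, mul_neg, neg_neg, mul_smul_comm]
    exact (M w).smul_mem _ (memB w 0)
  · show ε w 0 * B w 2 ∈ M w
    simp only [B0, B1, B2, B3, B4, B5, B6, B7, mul_assoc, l10', l20', l21', l10, l20, l21, q0, q1, q2, q0', q1', q2', mul_one, mul_neg, neg_neg, mul_smul_comm]
    exact memB w 4
  · show ε w 0 * B w 3 ∈ M w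
    simp only [B0, B1, B2, B3, B4, B5, B6, B7, mul_assoc, l10', l20', l21', l10, l20, l21, q0, q1, q2, q0', q1', q2', mul_one, mul_neg, neg_neg, mul_smul_comm]
    exact memB w 5
  · show ε w 0 * B w 4 ∈ M w
    simp only [B0, B1, B2, B3, B4, B5, B6, B7, mul_assoc, l10', l20', l21', l10, l20, l21, q0, q1, q2, q0', q1', q2', mul_one, mul_neg, neg_neg, mul_smul_comm]
    exact (M w).smul_mem _ (memB w 2)
  · show ε w 0 * B w 5 ∈ M w
    simp only [B0, B1, B2, B3, B4, B5, B6, B7, mul_assoc, l10', l20', l21', l10, l20, l21, q0, q1, q2, q0', q1', q2', mul_one, mul_neg, neg_neg, mul_smul_comm]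
    exact (M w).smul_mem _ (memB w 3)
  · show ε w 0 * B w 6 ∈ M w
    simp only [B0, B1, B2, B3, B4, B5, B6, B7, mul_assoc, l10', l20', l21', l10, l20, l21, q0, q1, q2, q0', q1', q2', mul_one, mul_neg, neg_neg, mul_smul_comm]
    rw [← mul_assoc]; exact memB w 7
  · show ε w 0 * B w 7 ∈ M w
    simp only [B0, B1, B2, B3, B4, B5, B6, B7, mul_assoc, l10', l20', l21', l10, l20, l21, q0, q1, q2, q0', q1', q2', mul_one, mul_neg, neg_neg, mul_smul_comm]
    exact (M w).smul_mem _ (memB w 6)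
  · show ε w 1 * B w 0 ∈ M w
    simp only [B0, B1, B2, B3, B4, B5, B6, B7, mul_assoc, l10', l20', l21', l10, l20, l21, q0, q1, q2, q0', q1', q2', mul_one, mul_neg, neg_neg, mul_smul_comm]
    exact memB w 2
  · show ε w 1 * B w 1 ∈ M w
    simp only [B0, B1, B2, B3, B4, B5, B6, B7, mul_assoc, l10', l20', l21', l10, l20, l21, q0, q1, q2, q0', q1', q2', mul_one, mul_neg, neg_neg, mul_smul_comm]
    exact (M w).neg_mem (memB w 4)
  · show ε w 1 * B w 2 ∈ M w
    simp only [B0, B1, B2, B3, B4, B5, B6, B7, mul_assoc, l10', l20', l21', l10, l20, l21, q0, q1, q2, q0', q1', q2', mul_one, mul_neg, neg_neg, mul_smul_comm]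
    exact (M w).smul_mem _ (memB w 0)
  · show ε w 1 * B w 3 ∈ M w
    simp only [B0, B1, B2, B3, B4, B5, B6, B7, mul_assoc, l10', l20', l21', l10, l20, l21, q0, q1, q2, q0', q1', q2', mul_one, mul_neg, neg_neg, mul_smul_comm]
    exact memB w 6
  · show ε w 1 * B w 4 ∈ M w
    simp only [B0, B1, B2, B3, B4, B5, B6, B7, mul_assoc, l10', l20', l21', l10, l20, l21, q0, q1, q2, q0', q1', q2', mul_one, mul_neg, neg_neg, mul_smul_comm]
    exact (M w).neg_mem ((M w).smul_mem _ (memB w 1))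
  · show ε w 1 * B w 5 ∈ M w
    simp only [B0, B1, B2, B3, B4, B5, B6, B7, mul_assoc, l10', l20', l21', l10, l20, l21, q0, q1, q2, q0', q1', q2', mul_one, mul_neg, neg_neg, mul_smul_comm]
    rw [← mul_assoc]; exact (M w).neg_mem (memB w 7)
  · show ε w 1 * B w 6 ∈ M w
    simp only [B0, B1, B2, B3, B4, B5, B6, B7, mul_assoc, l10', l20', l21', l10, l20, l21, q0, q1, q2, q0', q1', q2', mul_one, mul_neg, neg_neg, mul_smul_comm]
    exact (M w).smul_mem _ (memB w 3)
  · show ε w 1 * B w 7 ∈ M w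
    simp only [B0, B1, B2, B3, B4, B5, B6, B7, mul_assoc, l10', l20', l21', l10, l20, l21, q0, q1, q2, q0', q1', q2', mul_one, mul_neg, neg_neg, mul_smul_comm]
    exact (M w).neg_mem ((M w).smul_mem _ (memB w 5))
  · show ε w 2 * B w 0 ∈ M w
    simp only [B0, B1, B2, B3, B4, B5, B6, B7, mul_assoc, l10', l20', l21', l10, l20, l21, q0, q1, q2, q0', q1', q2', mul_one, mul_neg, neg_neg, mul_smul_comm]
    exact memB w 3
  · show ε w 2 * B w 1 ∈ M w
    simp only [B0, B1, B2, B3, B4, B5, B6, B7, mul_assoc, l10', l20', l21', l10, l20, l21, q0, q1, q2, q0', q1', q2', mul_one, mul_neg, neg_neg, mul_smul_comm]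
    exact (M w).neg_mem (memB w 5)
  · show ε w 2 * B w 2 ∈ M w
    simp only [B0, B1, B2, B3, B4, B5, B6, B7, mul_assoc, l10', l20', l21', l10, l20, l21, q0, q1, q2, q0', q1', q2', mul_one, mul_neg, neg_neg, mul_smul_comm]
    exact (M w).neg_mem (memB w 6)
  · show ε w 2 * B w 3 ∈ M w
    simp only [B0, B1, B2, B3, B4, B5, B6, B7, mul_assoc, l10', l20', l21', l10, l20, l21, q0, q1, q2, q0', q1', q2', mul_one, mul_neg, neg_neg, mul_smul_comm]
    exact (M w).smul_mem _ (memB w 0)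
  · show ε w 2 * B w 4 ∈ M w
    simp only [B0, B1, B2, B3, B4, B5, B6, B7, mul_assoc, l10', l20', l21', l10, l20, l21, q0, q1, q2, q0', q1', q2', mul_one, mul_neg, neg_neg, mul_smul_comm]
    rw [← mul_assoc]; exact memB w 7
  · show ε w 2 * B w 5 ∈ M w
    simp only [B0, B1, B2, B3, B4, B5, B6, B7, mul_assoc, l10', l20', l21', l10, l20, l21, q0, q1, q2, q0', q1', q2', mul_one, mul_neg, neg_neg, mul_smul_comm]
    exact (M w).neg_mem ((M w).smul_mem _ (memB w 1))
  · show ε w 2 * B w 6 ∈ M w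
    simp only [B0, B1, B2, B3, B4, B5, B6, B7, mul_assoc, l10', l20', l21', l10, l20, l21, q0, q1, q2, q0', q1', q2', mul_one, mul_neg, neg_neg, mul_smul_comm]
    exact (M w).neg_mem ((M w).smul_mem _ (memB w 2))
  · show ε w 2 * B w 7 ∈ M w
    simp only [B0, B1, B2, B3, B4, B5, B6, B7, mul_assoc, l10', l20', l21', l10, l20, l21, q0, q1, q2, q0', q1', q2', mul_one, mul_neg, neg_neg, mul_smul_comm]
    exact (M w).smul_mem _ (memB w 4)

lemma iota_decomp (v : Fin 3 → ℝ) :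
    (CliffordAlgebra.ι Qw) v = v 0 • ε w 0 + v 1 • ε w 1 + v 2 • ε w 2 := by
  rw [ε, ε, ε, ← _root_.map_smul, ← _root_.map_smul, ← _root_.map_smul, ← _root_.map_add, ← _root_.map_add]
  congr 1
  ext j
  fin_cases j <;> simp

lemma mem_M (z : CliffordAlgebra Qw) : z ∈ M w := by
  have key : ∀ z : CliffordAlgebra Qw, ∀ m ∈ M w, z * m ∈ M w := by
    intro z
    induction z using CliffordAlgebra.induction with
    | algebraMap r =>
      intro m hm
      rw [← Algebra.smul_def]
      exact (M w).smul_mem _ hm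
    | ι v =>
      intro m hm
      induction hm using Submodule.span_induction with
      | mem x hx =>
        obtain ⟨s, rfl⟩ := hx
        rw [iota_decomp, add_mul, add_mul, smul_mul_assoc, smul_mul_assoc, smul_mul_assoc]
        exact (M w).add_mem ((M w).add_mem ((M w).smul_mem _ (eps_mul_B w 0 s))
          ((M w).smul_mem _ (eps_mul_B w 1 s))) ((M w).smul_mem _ (eps_mul_B w 2 s))
      | zero => rw [mul_zero]; exact (M w).zero_mem
      | add x y hx hy hx' hy' => rw [mul_add]; exact (M w).add_mem hx' hy'
      | smul a x hx hx' => rw [mul_smul_comm]; exact (M w).smul_mem _ hx'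
    | mul a b ha hb =>
      intro m hm
      rw [mul_assoc]
      exact ha _ (hb _ hm)
    | add a b ha hb =>
      intro m hm
      rw [add_mul]
      exact (M w).add_mem (ha _ hm) (hb _ hm)
  simpa using key z 1 (memB w 0)

variable (hw : ∀ i, w i = 1 ∨ w i = -1)

lemma rho_eps0 : ρ w hw (ε w 0) =
    (!![0, sg w 0; sg w 0, 0], !![0, -sg w 0; -sg w 0, 0]) := by
  rw [ε, ρ, CliffordAlgebra.lift_ι_apply]
  show (gm w _, -(gm w _)) = _
  refine Prod.ext ?_ ?_ <;> ext i j <;> fin_cases i <;> fin_cases j <;>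
    simp [gm, Pi.single_apply]

lemma rho_eps1 : ρ w hw (ε w 1) =
    (!![0, -(Complex.I * sg w 1); Complex.I * sg w 1, 0],
     !![0, Complex.I * sg w 1; -(Complex.I * sg w 1), 0]) := by
  rw [ε, ρ, CliffordAlgebra.lift_ι_apply]
  show (gm w _, -(gm w _)) = _
  refine Prod.ext ?_ ?_ <;> ext i j <;> fin_cases i <;> fin_cases j <;>
    simp [gm, Pi.single_apply]

lemma rho_eps2 : ρ w hw (ε w 2) =
    (!![sg w 2, 0; 0, -sg w 2], !![-sg w 2, 0; 0, sg w 2]) := by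
  rw [ε, ρ, CliffordAlgebra.lift_ι_apply]
  show (gm w _, -(gm w _)) = _
  refine Prod.ext ?_ ?_ <;> ext i j <;> fin_cases i <;> fin_cases j <;>
    simp [gm, Pi.single_apply]

lemma rho_B4 : ρ w hw (B w 4) =
    (!![Complex.I * (sg w 0 * sg w 1), 0; 0, -(Complex.I * (sg w 0 * sg w 1))],
     !![Complex.I * (sg w 0 * sg w 1), 0; 0, -(Complex.I * (sg w 0 * sg w 1))]) := by
  rw [B4, _root_.map_mul, rho_eps0, rho_eps1]
  show (_*_, _*_) = _
  rw [Matrix.mul_fin_two, Matrix.mul_fin_two]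
  congr 1 <;> congr 1 <;> ring

lemma rho_B5 : ρ w hw (B w 5) =
    (!![0, -(sg w 0 * sg w 2); sg w 0 * sg w 2, 0],
     !![0, -(sg w 0 * sg w 2); sg w 0 * sg w 2, 0]) := by
  rw [B5, _root_.map_mul, rho_eps0, rho_eps2]
  show (_*_, _*_) = _
  rw [Matrix.mul_fin_two, Matrix.mul_fin_two]
  congr 1 <;> congr 1 <;> ring

lemma rho_B6 : ρ w hw (B w 6) =
    (!![0, Complex.I * (sg w 1 * sg w 2); Complex.I * (sg w 1 * sg w 2), 0],
     !![0, Complex.I * (sg w 1 * sg w 2); Complex.I * (sg w 1 * sg w 2), 0]) := by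
  rw [B6, _root_.map_mul, rho_eps1, rho_eps2]
  show (_*_, _*_) = _
  rw [Matrix.mul_fin_two, Matrix.mul_fin_two]
  congr 1 <;> congr 1 <;> ring

lemma rho_B7 : ρ w hw (B w 7) =
    (!![Complex.I * (sg w 0 * (sg w 1 * sg w 2)), 0;
        0, Complex.I * (sg w 0 * (sg w 1 * sg w 2))],
     !![-(Complex.I * (sg w 0 * (sg w 1 * sg w 2))), 0;
        0, -(Complex.I * (sg w 0 * (sg w 1 * sg w 2)))]) := by
  have : B w 7 = B w 4 * ε w 2 := by rw [B7, B4]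
  rw [this, _root_.map_mul, rho_B4, rho_eps2]
  show (_*_, _*_) = _
  rw [Matrix.mul_fin_two, Matrix.mul_fin_two]
  congr 1 <;> congr 1 <;> ring

lemma rho_B0 : ρ w hw (B w 0) = (1, 1) := by
  rw [B0, _root_.map_one]; rfl

lemma rho_inj (z : CliffordAlgebra Qw) (hz : ρ w hw z = 0) : z = 0 := by
  obtain ⟨c, hc⟩ := (Submodule.mem_span_range_iff_exists_fun ℝ).mp (mem_M w z)
  have h2 : ∑ i, c i • (ρ w hw) (B w i) = 0 := by
    have : (ρ w hw) (∑ i, c i • B w i) = 0 := by rw [hc, hz]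
    rw [_root_.map_sum] at this
    simpa [_root_.map_smul] using this
  rw [Fin.sum_univ_eight] at h2
  rw [rho_B0 w hw, B1, B2, B3, rho_eps0 w hw, rho_eps1 w hw, rho_eps2 w hw, rho_B4 w hw,
    rho_B5 w hw, rho_B6 w hw, rho_B7 w hw] at h2
  have ha := congrArg Prod.fst h2
  have hb := congrArg Prod.snd h2
  simp only [Prod.fst_add, Prod.snd_add, Prod.smul_fst, Prod.smul_snd, Prod.fst_zero,
    Prod.snd_zero] at ha hb
  have a00 := Matrix.ext_iff.mpr ha 0 0
  have a01 := Matrix.ext_iff.mpr ha 0 1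
  have a10 := Matrix.ext_iff.mpr ha 1 0
  have a11 := Matrix.ext_iff.mpr ha 1 1
  have b00 := Matrix.ext_iff.mpr hb 0 0
  have b01 := Matrix.ext_iff.mpr hb 0 1
  have b10 := Matrix.ext_iff.mpr hb 1 0
  have b11 := Matrix.ext_iff.mpr hb 1 1
  simp [Matrix.one_apply, Complex.real_smul] at a00 a01 a10 a11 b00 b01 b10 b11
  have ne0 := sg_ne_zero w 0
  have ne1 := sg_ne_zero w 1
  have ne2 := sg_ne_zero w 2
  have e0 : c 0 = 0 := by
    have h : (c 0 : ℂ) = 0 := by linear_combination (a00 + a11 + b00 + b11) / 4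
    exact_mod_cast h
  have e7 : c 7 = 0 := by
    have h : Complex.I * (sg w 0 * (sg w 1 * sg w 2)) * (c 7 : ℂ) = 0 := by
      linear_combination (a00 + a11 - b00 - b11) / 4
    simpa [Complex.I_ne_zero, ne0, ne1, ne2, mul_eq_zero, Complex.ofReal_eq_zero] using h
  have e4 : c 4 = 0 := by
    have h : Complex.I * (sg w 0 * sg w 1) * (c 4 : ℂ) = 0 := by
      linear_combination (a00 - a11 + b00 - b11) / 4
    simpa [Complex.I_ne_zero, ne0, ne1, mul_eq_zero, Complex.ofReal_eq_zero] using h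
  have e3 : c 3 = 0 := by
    have h : sg w 2 * (c 3 : ℂ) = 0 := by
      linear_combination (a00 - a11 - b00 + b11) / 4
    simpa [ne2, mul_eq_zero, Complex.ofReal_eq_zero] using h
  have e6 : c 6 = 0 := by
    have h : Complex.I * (sg w 1 * sg w 2) * (c 6 : ℂ) = 0 := by
      linear_combination (a01 + a10 + b01 + b10) / 4
    simpa [Complex.I_ne_zero, ne1, ne2, mul_eq_zero, Complex.ofReal_eq_zero] using h
  have e1 : c 1 = 0 := by
    have h : sg w 0 * (c 1 : ℂ) = 0 := by
      linear_combination (a01 + a10 - b01 - b10) / 4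
    simpa [ne0, mul_eq_zero, Complex.ofReal_eq_zero] using h
  have e2 : c 2 = 0 := by
    have h : Complex.I * sg w 1 * (c 2 : ℂ) = 0 := by
      linear_combination (a10 - a01 + b01 - b10) / 4
    simpa [Complex.I_ne_zero, ne1, mul_eq_zero, Complex.ofReal_eq_zero] using h
  have e5 : c 5 = 0 := by
    have h : sg w 0 * sg w 2 * (c 5 : ℂ) = 0 := by
      linear_combination (a10 - a01 - b01 + b10) / 4
    simpa [ne0, ne2, mul_eq_zero, Complex.ofReal_eq_zero] using h
  rw [← hc, Fin.sum_univ_eight, e0, e1, e2, e3, e4, e5, e6, e7]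
  simp

-- adjugate linearity for 2x2 complex matrices
lemma adj_add (A B : Mat) : (A + B).adjugate = A.adjugate + B.adjugate := by
  rw [Matrix.adjugate_fin_two, Matrix.adjugate_fin_two, Matrix.adjugate_fin_two]
  ext i j
  fin_cases i <;> fin_cases j <;> simp <;> ring

lemma adj_neg (A : Mat) : (-A).adjugate = -A.adjugate := by
  rw [Matrix.adjugate_fin_two, Matrix.adjugate_fin_two]
  ext i j
  fin_cases i <;> fin_cases j <;> simp

lemma adj_algebraMap (r : ℝ) :
    (algebraMap ℝ Mat r).adjugate = algebraMap ℝ Mat r := by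
  rw [Matrix.adjugate_fin_two]
  ext i j
  fin_cases i <;> fin_cases j <;> simp [Matrix.algebraMap_matrix_apply]

lemma adj_gm (v : Fin 3 → ℝ) : (gm w v).adjugate = -(gm w v) := by
  rw [Matrix.adjugate_fin_two]
  ext i j
  fin_cases i <;> fin_cases j <;> simp [gm]

open CliffordAlgebra in
lemma rho_conj (a : CliffordAlgebra Qw) :
    ρ w hw (reverse (involute a)) = ((ρ w hw a).1.adjugate, (ρ w hw a).2.adjugate) := by
  induction a using CliffordAlgebra.induction with
  | algebraMap r =>
    rw [AlgHom.commutes, reverse.commutes, AlgHom.commutes]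
    show _ = ((algebraMap ℝ Mat r).adjugate, (algebraMap ℝ Mat r).adjugate)
    rw [adj_algebraMap]
    rfl
  | ι v =>
    rw [involute_ι, _root_.map_neg, reverse_ι, _root_.map_neg, ρ, CliffordAlgebra.lift_ι_apply]
    show -(gm w v, -(gm w v)) = ((gm w v).adjugate, (-(gm w v)).adjugate)
    rw [adj_gm, adj_neg, adj_gm, neg_neg, Prod.neg_mk, neg_neg]
  | mul x y hx hy =>
    rw [_root_.map_mul, reverse.map_mul, _root_.map_mul, hx, hy, _root_.map_mul]
    simp only [Prod.mk_mul_mk, Prod.fst_mul, Prod.snd_mul, Matrix.adjugate_mul_distrib]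
  | add x y hx hy =>
    rw [_root_.map_add, _root_.map_add, _root_.map_add, hx, hy]
    simp only [_root_.map_add, Prod.mk_add_mk, Prod.fst_add, Prod.snd_add, adj_add]

include hw in
open CliffordAlgebra in
lemma comm_iota (a : CliffordAlgebra Qw) (v : Fin 3 → ℝ) :
    ι Qw v * (a * reverse (involute a)) = (a * reverse (involute a)) * ι Qw v := by
  have hρX : ρ w hw (a * reverse (involute a)) =
      ((ρ w hw a).1.det • 1, (ρ w hw a).2.det • 1) := by
    rw [_root_.map_mul, rho_conj w hw]
    show (_ * _, _ * _) = _
    rw [Matrix.mul_adjugate, Matrix.mul_adjugate]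
  have key : ρ w hw (ι Qw v * (a * reverse (involute a))
      - (a * reverse (involute a)) * ι Qw v) = 0 := by
    rw [_root_.map_sub, _root_.map_mul (ρ w hw) (ι Qw v) (a * reverse (involute a)),
      _root_.map_mul (ρ w hw) (a * reverse (involute a)) (ι Qw v), hρX]
    refine Prod.ext ?_ ?_ <;>
      simp [Prod.mul_def, mul_smul_comm, smul_mul_assoc]
  have := rho_inj w hw _ key
  linear_combination (norm := noncomm_ring) this

include hw in
theorem main (a : CliffordAlgebra Qw) :
    a * CliffordAlgebra.reverse (CliffordAlgebra.involute a) ∈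
      Subalgebra.center ℝ (CliffordAlgebra Qw) := by
  rw [Subalgebra.mem_center_iff]
  intro b
  set X := a * CliffordAlgebra.reverse (CliffordAlgebra.involute a) with hX
  induction b using CliffordAlgebra.induction with
  | algebraMap r => exact Algebra.commutes r X
  | ι v => exact comm_iota w hw a v
  | mul x y hx hy => rw [mul_assoc, hy, ← mul_assoc, hx, mul_assoc]
  | add x y hx hy => rw [add_mul, mul_add, hx, hy]

end Cliff3

theorem clifford3_mul_conj_mem_center (w : Fin 3 → ℝ)
    (hw : ∀ i, w i = 1 ∨ w i = -1)
    (a : CliffordAlgebra (QuadraticMap.weightedSumSquares ℝ w)) :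
    a * CliffordAlgebra.reverse (CliffordAlgebra.involute a) ∈
      Subalgebra.center ℝ (CliffordAlgebra (QuadraticMap.weightedSumSquares ℝ w)) := by
  exact Cliff3.main w hw a
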